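/- arXiv:1106.4057 — 4 statements merged into one kernel-verified Lean document; each statement's English description precedes it below -/
import Mathlib

section
/- For any odd positive integer n = 2m+1, the alternating sum Σ_{i=1}^{n} (−1)^{i−1}·binom(n+i−2, i−1)·((2n−i−1)!/(n−i)!)·Π_{j=0}^{n−2} (3j+1)!/(n+j)! equals ((1/2^m)·Π_{i=1}^{m} (6i−2)!(2i−1)!/((4i−1)!(4i−2)!))^2. -/
open Finset PowerSeries

noncomputable def sqHom : ℚ⟦X⟧ →+* ℚ⟦X⟧ where
  toFun φ := PowerSeries.mk fun d => if 2 ∣ d then PowerSeries.coeff (R := ℚ) (d/2) φ else 0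
  map_zero' := by ext n; simp
  map_one' := by
    ext n
    simp only [coeff_mk, coeff_one]
    split_ifs <;> first | rfl | (exfalso; omega)
  map_add' := by intro φ ψ; ext n; simp only [coeff_mk, map_add]; split_ifs <;> simp
  map_mul' := by
    intro φ ψ
    ext k
    simp only [coeff_mk, coeff_mul]
    rcases Nat.even_or_odd k with ⟨t, ht⟩ | hodd
    · have hk : 2 ∣ k := ⟨t, by omega⟩
      rw [if_pos hk]
      have ht2 : k / 2 = t := by omega
      rw [ht2]
      rw [show ∑ p ∈ Finset.HasAntidiagonal.antidiagonal k,
          (if 2 ∣ p.1 then (coeff (R := ℚ) (p.1 / 2)) φ else 0) *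
            (if 2 ∣ p.2 then (coeff (R := ℚ) (p.2 / 2)) ψ else 0)
          = ∑ p ∈ (Finset.HasAntidiagonal.antidiagonal t).map
              ⟨fun q => (2*q.1, 2*q.2), show Function.Injective _ from by intro a b hab; simp at hab; ext <;> omega⟩,
              (if 2 ∣ p.1 then (coeff (R := ℚ) (p.1 / 2)) φ else 0) *
            (if 2 ∣ p.2 then (coeff (R := ℚ) (p.2 / 2)) ψ else 0) from ?_, Finset.sum_map]
      · apply Finset.sum_congr rfl
        intro q hq
        simp only [Function.Embedding.coeFn_mk]
        rw [if_pos ⟨q.1, rfl⟩, if_pos ⟨q.2, rfl⟩]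
        have e1 : 2 * q.1 / 2 = q.1 := by omega
        have e2 : 2 * q.2 / 2 = q.2 := by omega
        rw [e1, e2]
      · apply (Finset.sum_subset ?_ ?_).symm
        · intro p hp
          simp only [Finset.mem_map, Function.Embedding.coeFn_mk, Finset.HasAntidiagonal.mem_antidiagonal] at hp ⊢
          obtain ⟨q, hq, rfl⟩ := hp
          omega
        · intro p hp hnp
          simp only [Finset.HasAntidiagonal.mem_antidiagonal] at hp
          simp only [Finset.mem_map, Function.Embedding.coeFn_mk, Finset.HasAntidiagonal.mem_antidiagonal] at hnp
          by_cases h1 : 2 ∣ p.1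
          · by_cases h2 : 2 ∣ p.2
            · exfalso
              refine hnp ⟨(p.1/2, p.2/2), by omega, ?_⟩
              obtain ⟨a, ha⟩ := h1; obtain ⟨b, hb⟩ := h2
              have : (2 * (p.1/2), 2 * (p.2/2)) = p := by ext <;> simp <;> omega
              simpa using this
            · rw [if_neg h2, mul_zero]
          · rw [if_neg h1, zero_mul]
    · rcases hodd with ⟨t, ht⟩
      rw [if_neg (by omega)]
      symm
      apply Finset.sum_eq_zero
      intro p hp
      simp only [Finset.HasAntidiagonal.mem_antidiagonal] at hp
      by_cases h1 : 2 ∣ p.1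
      · have h2 : ¬ 2 ∣ p.2 := by omega
        rw [if_neg h2, mul_zero]
      · rw [if_neg h1, zero_mul]

lemma sqHom_coeff (φ : ℚ⟦X⟧) (d : ℕ) :
    PowerSeries.coeff (R := ℚ) d (sqHom φ) =
      if 2 ∣ d then PowerSeries.coeff (R := ℚ) (d/2) φ else 0 := by
  simp only [sqHom, RingHom.coe_mk, MonoidHom.coe_mk, OneHom.coe_mk, coeff_mk]

lemma sqHom_X : sqHom (X : ℚ⟦X⟧) = X ^ 2 := by
  ext n
  rw [sqHom_coeff]
  simp only [coeff_X, coeff_X_pow]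
  split_ifs with h1 h2 h3 h3 <;> first | rfl | omega

lemma conv_eval (N d : ℕ) :
    ∑ p ∈ Finset.HasAntidiagonal.antidiagonal d,
      ((-1:ℚ)^p.1 * ((N+p.1).choose N : ℚ) * ((N+p.2).choose N : ℚ))
    = if 2 ∣ d then (((N + d/2).choose N : ℕ) : ℚ) else 0 := by
  set B : ℚ⟦X⟧ := PowerSeries.mk fun n => ((N+n).choose N : ℚ) with hBdef
  have hB : B * (1 - X)^(N+1) = 1 := by
    simpa using PowerSeries.mk_add_choose_mul_one_sub_pow_eq_one (S := ℚ) (d := N)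
  set A : ℚ⟦X⟧ := PowerSeries.rescale (-1 : ℚ) B with hAdef
  have hA : A * (1 + X)^(N+1) = 1 := by
    have := congrArg (PowerSeries.rescale (-1 : ℚ)) hB
    rw [map_mul, map_pow, map_sub, map_one, PowerSeries.rescale_neg_one_X, sub_neg_eq_add] at this
    exact this
  have hAB : (A * B) * (1 - X^2 : ℚ⟦X⟧)^(N+1) = 1 := by
    have hfac : (1 - X^2 : ℚ⟦X⟧)^(N+1) = (1+X)^(N+1) * (1-X)^(N+1) := by
      rw [← mul_pow]; ring_nf
    rw [hfac]
    calc A * B * ((1+X)^(N+1) * (1-X)^(N+1))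
        = (A * (1+X)^(N+1)) * (B * (1-X)^(N+1)) := by ring
      _ = 1 := by rw [hA, hB, mul_one]
  have hG : sqHom B * (1 - X^2 : ℚ⟦X⟧)^(N+1) = 1 := by
    have := congrArg sqHom hB
    rw [map_mul, map_pow, map_sub, map_one, sqHom_X] at this
    exact this
  have hEq : A * B = sqHom B := by
    calc A * B = (A * B) * ((sqHom B) * (1 - X^2 : ℚ⟦X⟧)^(N+1)) := by rw [hG, mul_one]
      _ = (sqHom B) * ((A * B) * (1 - X^2 : ℚ⟦X⟧)^(N+1)) := by ring
      _ = sqHom B := by rw [hAB, mul_one]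
  have hc := congrArg (PowerSeries.coeff (R := ℚ) d) hEq
  rw [PowerSeries.coeff_mul, sqHom_coeff] at hc
  rw [hBdef] at hc
  simp only [PowerSeries.coeff_rescale, PowerSeries.coeff_mk, hAdef, hBdef] at hc
  simpa using hc

lemma sum_eval (m : ℕ) :
    ∑ k ∈ Finset.range (2*m+1), ((-1:ℚ)^k * ((2*m+k).choose k : ℚ) *
      ((Nat.factorial (4*m-k) : ℚ) / (Nat.factorial (2*m-k) : ℚ)))
    = (Nat.factorial (3*m) : ℚ) / (Nat.factorial m : ℚ) := by
  have key := conv_eval (2*m) (2*m)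
  rw [Finset.Nat.sum_antidiagonal_eq_sum_range_succ_mk] at key
  rw [if_pos ⟨m, by ring⟩] at key
  have hdiv : 2*m/2 = m := by omega
  rw [hdiv] at key
  have key2 : ∑ i ∈ Finset.range (2*m+1),
      ((-1:ℚ)^i * ((2*m+i).choose (2*m) : ℚ) * ((4*m-i).choose (2*m) : ℚ))
      = ((3*m).choose (2*m) : ℚ) := by
    rw [show (3*m) = 2*m+m from by ring, ← key]
    apply Finset.sum_congr
    · rfl
    · intro i hi
      rw [Finset.mem_range] at hi
      have h4 : 2*m + (2*m - i) = 4*m - i := by omega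
      simp only [h4]
  have hterm : ∀ k ∈ Finset.range (2*m+1),
      (-1:ℚ)^k * ((2*m+k).choose k : ℚ) *
        ((Nat.factorial (4*m-k) : ℚ) / (Nat.factorial (2*m-k) : ℚ))
      = ((2*m).factorial : ℚ) * ((-1:ℚ)^k * ((2*m+k).choose (2*m) : ℚ) *
          ((4*m-k).choose (2*m) : ℚ)) := by
    intro k hk
    rw [Finset.mem_range] at hk
    have hk' : k ≤ 2*m := by omega
    have hsym : (2*m+k).choose k = (2*m+k).choose (2*m) := by
      rw [← Nat.choose_symm (by omega : k ≤ 2*m+k)]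
      congr 1
      omega
    have hfac : (Nat.factorial (4*m-k) : ℚ)
        = ((4*m-k).choose (2*m) : ℚ) * ((2*m).factorial : ℚ) *
          ((2*m-k).factorial : ℚ) := by
      have h := Nat.choose_mul_factorial_mul_factorial
        (show 2*m ≤ 4*m-k by omega)
      have h2 : 4*m-k - 2*m = 2*m-k := by omega
      rw [h2] at h
      exact_mod_cast h.symm
    rw [hsym, hfac]
    have hne : ((2*m-k).factorial : ℚ) ≠ 0 := by
      exact_mod_cast (Nat.factorial_pos _).ne'
    field_simp
  rw [Finset.sum_congr rfl hterm, ← Finset.mul_sum, key2]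
  have h := Nat.choose_mul_factorial_mul_factorial (show 2*m ≤ 3*m by omega)
  have h2 : 3*m - 2*m = m := by omega
  rw [h2] at h
  have hm : ((m).factorial : ℚ) ≠ 0 := by exact_mod_cast (Nat.factorial_pos _).ne'
  rw [eq_div_iff hm]
  have hq := congrArg (Nat.cast : ℕ → ℚ) h
  push_cast at hq ⊢
  linarith

lemma factorial_cleared (m : ℕ) :
    ((3*m).factorial : ℚ) * (∏ j ∈ Finset.range (2*m), ((3*j+1).factorial : ℚ)) *
      (∏ k ∈ Finset.range (2*m+1), (k.factorial : ℚ)) *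
      (∏ i ∈ Finset.Icc 1 m, (((4*i-1).factorial : ℚ) * ((4*i-2).factorial : ℚ)))^2 *
      ((2:ℚ)^m)^2
    = (m.factorial : ℚ) * (∏ k ∈ Finset.range (4*m+1), (k.factorial : ℚ)) *
      (∏ i ∈ Finset.Icc 1 m, (((6*i-2).factorial : ℚ) * ((2*i-1).factorial : ℚ)))^2 := by
  induction m with
  | zero => simp
  | succ m ih =>
    have e1 : ((3*m+3).factorial : ℚ)
        = (3*(m:ℚ)+3)*(3*(m:ℚ)+2)*(3*(m:ℚ)+1) * ((3*m).factorial : ℚ) := by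
      rw [show 3*m+3 = 3*m+2+1 from by ring, Nat.factorial_succ,
          show 3*m+2 = 3*m+1+1 from by ring, Nat.factorial_succ, Nat.factorial_succ]
      push_cast; ring
    have e2 : ((6*m+4).factorial : ℚ)
        = (6*(m:ℚ)+4)*(6*(m:ℚ)+3)*(6*(m:ℚ)+2) * ((6*m+1).factorial : ℚ) := by
      rw [show 6*m+4 = 6*m+3+1 from by ring, Nat.factorial_succ,
          show 6*m+3 = 6*m+2+1 from by ring, Nat.factorial_succ,
          show 6*m+2 = 6*m+1+1 from by ring, Nat.factorial_succ]
      push_cast; ring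
    have e3 : ((2*m+2).factorial : ℚ) = (2*(m:ℚ)+2) * ((2*m+1).factorial : ℚ) := by
      rw [show 2*m+2 = 2*m+1+1 from by ring, Nat.factorial_succ]
      push_cast; ring
    have e4 : ((4*m+2).factorial : ℚ) = (4*(m:ℚ)+2) * ((4*m+1).factorial : ℚ) := by
      rw [show 4*m+2 = 4*m+1+1 from by ring, Nat.factorial_succ]
      push_cast; ring
    have e5 : ((4*m+3).factorial : ℚ)
        = (4*(m:ℚ)+3)*(4*(m:ℚ)+2) * ((4*m+1).factorial : ℚ) := by
      rw [show 4*m+3 = 4*m+2+1 from by ring, Nat.factorial_succ,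
          show 4*m+2 = 4*m+1+1 from by ring, Nat.factorial_succ]
      push_cast; ring
    have e6 : ((4*m+4).factorial : ℚ)
        = (4*(m:ℚ)+4)*(4*(m:ℚ)+3)*(4*(m:ℚ)+2) * ((4*m+1).factorial : ℚ) := by
      rw [show 4*m+4 = 4*m+3+1 from by ring, Nat.factorial_succ,
          show 4*m+3 = 4*m+2+1 from by ring, Nat.factorial_succ,
          show 4*m+2 = 4*m+1+1 from by ring, Nat.factorial_succ]
      push_cast; ring
    have e7 : ((m+1).factorial : ℚ) = ((m:ℚ)+1) * (m.factorial : ℚ) := by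
      rw [Nat.factorial_succ]; push_cast; ring
    have pN : (∏ j ∈ Finset.range (2*(m+1)), ((3*j+1).factorial : ℚ))
        = (∏ j ∈ Finset.range (2*m), ((3*j+1).factorial : ℚ))
          * ((6*m+1).factorial : ℚ) * ((6*m+4).factorial : ℚ) := by
      rw [show 2*(m+1) = (2*m+1)+1 from by ring, Finset.prod_range_succ,
          Finset.prod_range_succ,
          show 3*(2*m)+1 = 6*m+1 from by ring, show 3*(2*m+1)+1 = 6*m+4 from by ring]
    have pE1 : (∏ k ∈ Finset.range (2*(m+1)+1), (k.factorial : ℚ))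
        = (∏ k ∈ Finset.range (2*m+1), (k.factorial : ℚ))
          * ((2*m+1).factorial : ℚ) * ((2*m+2).factorial : ℚ) := by
      rw [show 2*(m+1)+1 = (2*m+1+1)+1 from by ring, Finset.prod_range_succ,
          Finset.prod_range_succ, show 2*m+1+1 = 2*m+2 from by ring]
    have pE4 : (∏ k ∈ Finset.range (4*(m+1)+1), (k.factorial : ℚ))
        = (∏ k ∈ Finset.range (4*m+1), (k.factorial : ℚ))
          * ((4*m+1).factorial : ℚ) * ((4*m+2).factorial : ℚ)
          * ((4*m+3).factorial : ℚ) * ((4*m+4).factorial : ℚ) := by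
      rw [show 4*(m+1)+1 = (4*m+1+1+1+1)+1 from by ring, Finset.prod_range_succ,
          Finset.prod_range_succ, Finset.prod_range_succ, Finset.prod_range_succ,
          show 4*m+1+1 = 4*m+2 from by ring, show 4*m+2+1 = 4*m+3 from by ring,
          show 4*m+3+1 = 4*m+4 from by ring]
    have pV1 : (∏ i ∈ Finset.Icc 1 (m+1), (((4*i-1).factorial : ℚ) * ((4*i-2).factorial : ℚ)))
        = (∏ i ∈ Finset.Icc 1 m, (((4*i-1).factorial : ℚ) * ((4*i-2).factorial : ℚ)))
          * (((4*m+3).factorial : ℚ) * ((4*m+2).factorial : ℚ)) := by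
      rw [Finset.prod_Icc_succ_top (by omega : 1 ≤ m+1),
          show 4*(m+1)-1 = 4*m+3 from by omega, show 4*(m+1)-2 = 4*m+2 from by omega]
    have pV2 : (∏ i ∈ Finset.Icc 1 (m+1), (((6*i-2).factorial : ℚ) * ((2*i-1).factorial : ℚ)))
        = (∏ i ∈ Finset.Icc 1 m, (((6*i-2).factorial : ℚ) * ((2*i-1).factorial : ℚ)))
          * (((6*m+4).factorial : ℚ) * ((2*m+1).factorial : ℚ)) := by
      rw [Finset.prod_Icc_succ_top (by omega : 1 ≤ m+1),
          show 6*(m+1)-2 = 6*m+4 from by omega, show 2*(m+1)-1 = 2*m+1 from by omega]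
    rw [show 3*(m+1) = 3*m+3 from by ring, pN, pE1, pE4, pV1, pV2, pow_succ]
    rw [e1, e2, e3, e4, e5, e6, e7]
    linear_combination ((3*(m:ℚ)+3)*(3*(m:ℚ)+2)*(3*(m:ℚ)+1)
      * (((6*m+1).factorial : ℚ))^2 * ((6*(m:ℚ)+4)*(6*(m:ℚ)+3)*(6*(m:ℚ)+2))
      * (((2*m+1).factorial : ℚ))^2 * (2*(m:ℚ)+2)
      * ((4*(m:ℚ)+3)^2*(4*(m:ℚ)+2)^4*(((4*m+1).factorial : ℚ))^4) * 4) * ih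

lemma prod_identity (m : ℕ) :
    ((3*m).factorial : ℚ) / (m.factorial : ℚ) *
      ∏ j ∈ Finset.range (2*m), ((3*j+1).factorial : ℚ) / (((2*m+1)+j).factorial : ℚ)
    = ((1 / 2 ^ m : ℚ) * ∏ i ∈ Finset.Icc 1 m,
        ((Nat.factorial (6*i-2) : ℚ) * (Nat.factorial (2*i-1) : ℚ)) /
          ((Nat.factorial (4*i-1) : ℚ) * (Nat.factorial (4*i-2) : ℚ))) ^ 2 := by
  have H := factorial_cleared m
  have hD : (∏ k ∈ Finset.range (2*m+1), (Nat.factorial k : ℚ)) *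
      (∏ j ∈ Finset.range (2*m), (((2*m+1)+j).factorial : ℚ))
      = ∏ k ∈ Finset.range (4*m+1), (Nat.factorial k : ℚ) := by
    have h := Finset.prod_range_add (fun k => ((Nat.factorial k : ℚ))) (2*m+1) (2*m)
    rw [show 2*m+1+(2*m) = 4*m+1 from by ring] at h
    exact h.symm
  rw [Finset.prod_div_distrib, Finset.prod_div_distrib]
  have hfne : ∀ k : ℕ, ((Nat.factorial k : ℚ)) ≠ 0 := fun k => by
    exact_mod_cast (Nat.factorial_pos k).ne'
  have h1 : (m.factorial : ℚ) ≠ 0 := hfne m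
  have h2 : (∏ j ∈ Finset.range (2*m), (((2*m+1)+j).factorial : ℚ)) ≠ 0 :=
    Finset.prod_ne_zero_iff.mpr fun j _ => hfne _
  have h3 : (∏ i ∈ Finset.Icc 1 m, ((Nat.factorial (4*i-1) : ℚ) * (Nat.factorial (4*i-2) : ℚ))) ≠ 0 :=
    Finset.prod_ne_zero_iff.mpr fun i _ => mul_ne_zero (hfne _) (hfne _)
  have h4 : ((2:ℚ)^m) ≠ 0 := pow_ne_zero _ two_ne_zero
  have h5 : (∏ k ∈ Finset.range (2*m+1), (Nat.factorial k : ℚ)) ≠ 0 :=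
    Finset.prod_ne_zero_iff.mpr fun k _ => hfne _
  field_simp
  apply mul_left_cancel₀ h5
  linear_combination H - ((m.factorial : ℚ) *
    (∏ i ∈ Finset.Icc 1 m, ((Nat.factorial (6*i-2) : ℚ) * (Nat.factorial (2*i-1) : ℚ)))^2) * hD


/-- For odd `n = 2m+1`,
`Σ_{i=1}^{n} (−1)^{i−1}·C(n+i−2, i−1)·(2n−i−1)!/(n−i)!·Π_{j=0}^{n−2} (3j+1)!/(n+j)!`
equals `((1/2^m)·Π_{i=1}^{m} (6i−2)!(2i−1)!/((4i−1)!(4i−2)!))^2`. -/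
theorem asm_minus_one_enumeration_odd (m : ℕ) :
    (∑ i ∈ Finset.Icc 1 (2*m+1), (-1 : ℚ) ^ (i - 1) *
        (Nat.choose ((2*m+1) + i - 2) (i - 1) : ℚ) *
        ((Nat.factorial (2*(2*m+1) - i - 1) : ℚ) / (Nat.factorial ((2*m+1) - i) : ℚ)) *
        ∏ j ∈ Finset.range (2*m), (Nat.factorial (3*j+1) : ℚ) / (Nat.factorial ((2*m+1) + j) : ℚ)) =
      ((1 / 2 ^ m : ℚ) * ∏ i ∈ Finset.Icc 1 m,
        ((Nat.factorial (6*i-2) : ℚ) * (Nat.factorial (2*i-1) : ℚ)) /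
          ((Nat.factorial (4*i-1) : ℚ) * (Nat.factorial (4*i-2) : ℚ))) ^ 2 := by
  rw [← Finset.sum_mul]
  have hsum : (∑ i ∈ Finset.Icc 1 (2*m+1), (-1:ℚ)^(i-1) *
        (Nat.choose ((2*m+1)+i-2) (i-1) : ℚ) *
        ((Nat.factorial (2*(2*m+1)-i-1) : ℚ) / (Nat.factorial ((2*m+1)-i) : ℚ)))
      = (Nat.factorial (3*m) : ℚ) / (Nat.factorial m : ℚ) := by
    rw [← Finset.Ico_add_one_right_eq_Icc, Finset.sum_Ico_eq_sum_range,
        show 2*m+1+1-1 = 2*m+1 from by omega]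
    refine Eq.trans (Finset.sum_congr rfl fun k hk => ?_) (sum_eval m)
    rw [Finset.mem_range] at hk
    rw [show 1+k-1 = k from by omega, show (2*m+1)+(1+k)-2 = 2*m+k from by omega,
        show 2*(2*m+1)-(1+k)-1 = 4*m-k from by omega,
        show (2*m+1)-(1+k) = 2*m-k from by omega]
  rw [hsum]
  exact prod_identity m
end

section
/- For any even positive integer n, the alternating sum Σ_{i=1}^{n} (−1)^{i−1}·binom(n+i−2, i−1)·((2n−i−1)!/(n−i)!)·Π_{j=0}^{n−2} (3j+1)!/(n+j)! equals 0. -/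
open Finset

lemma asm_key (n i : ℕ) (hne : Even n) (h1 : 1 ≤ i) (hi : i ≤ n) :
    ((-1 : ℚ) ^ (i - 1) * (Nat.choose (n + i - 2) (i - 1) : ℚ) *
      ((Nat.factorial (2*n - i - 1) : ℚ) / (Nat.factorial (n - i) : ℚ))) +
    ((-1 : ℚ) ^ ((n + 1 - i) - 1) * (Nat.choose (n + (n + 1 - i) - 2) ((n + 1 - i) - 1) : ℚ) *
      ((Nat.factorial (2*n - (n + 1 - i) - 1) : ℚ) / (Nat.factorial (n - (n + 1 - i)) : ℚ))) = 0 := by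
  have hn1 : 1 ≤ n := le_trans h1 hi
  have e1 : (n + 1 - i) - 1 = n - i := by omega
  have e2 : n + (n + 1 - i) - 2 = 2*n - i - 1 := by omega
  have e3 : 2*n - (n + 1 - i) - 1 = n + i - 2 := by omega
  have e4 : n - (n + 1 - i) = i - 1 := by omega
  rw [e1, e2, e3, e4]
  have hle1 : i - 1 ≤ n + i - 2 := by omega
  have hle2 : n - i ≤ 2*n - i - 1 := by omega
  have s1 : n + i - 2 - (i - 1) = n - 1 := by omega
  have s2 : 2*n - i - 1 - (n - i) = n - 1 := by omega
  have hsign : (-1 : ℚ) ^ (n - i) = -(-1 : ℚ) ^ (i - 1) := by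
    have hodd : Odd (n - 1) := Nat.Even.sub_odd hn1 hne odd_one
    have hmul : (-1 : ℚ) ^ (i - 1) * (-1 : ℚ) ^ (n - i) = -1 := by
      rw [← pow_add, show (i - 1) + (n - i) = n - 1 by omega]
      exact Odd.neg_one_pow hodd
    have hsq : (-1 : ℚ) ^ (i - 1) * (-1 : ℚ) ^ (i - 1) = 1 := by
      rw [← pow_add]
      exact Even.neg_one_pow ⟨i - 1, rfl⟩
    calc (-1 : ℚ) ^ (n - i) = ((-1:ℚ)^(i-1)*(-1:ℚ)^(i-1)) * (-1:ℚ)^(n-i) := by rw [hsq, one_mul]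
      _ = (-1:ℚ)^(i-1) * ((-1:ℚ)^(i-1)*(-1:ℚ)^(n-i)) := by ring
      _ = -(-1:ℚ)^(i-1) := by rw [hmul]; ring
  rw [hsign]
  rw [Nat.cast_choose ℚ hle1, Nat.cast_choose ℚ hle2, s1, s2]
  have f1 := Nat.factorial_pos (i - 1)
  have f2 := Nat.factorial_pos (n - 1)
  have f3 := Nat.factorial_pos (n - i)
  have c1 : ((i-1).factorial : ℚ) ≠ 0 := by positivity
  have c2 : ((n-1).factorial : ℚ) ≠ 0 := by positivity
  have c3 : ((n-i).factorial : ℚ) ≠ 0 := by positivity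
  field_simp
  ring

/-- For even positive `n`,
`Σ_{i=1}^{n} (−1)^{i−1}·C(n+i−2, i−1)·(2n−i−1)!/(n−i)!·Π_{j=0}^{n−2} (3j+1)!/(n+j)! = 0`. -/
theorem asm_minus_one_enumeration_even (n : ℕ) (hn : 0 < n) (hne : Even n) :
    (∑ i ∈ Finset.Icc 1 n, (-1 : ℚ) ^ (i - 1) *
        (Nat.choose (n + i - 2) (i - 1) : ℚ) *
        ((Nat.factorial (2*n - i - 1) : ℚ) / (Nat.factorial (n - i) : ℚ)) *
        ∏ j ∈ Finset.range (n - 1),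
          (Nat.factorial (3*j+1) : ℚ) / (Nat.factorial (n + j) : ℚ)) = 0 := by
  apply Finset.sum_involution (fun i _ => n + 1 - i)
  · intro i hi
    simp only [Finset.mem_Icc] at hi
    have h := asm_key n i hne hi.1 hi.2
    set P := ∏ j ∈ Finset.range (n - 1),
          (Nat.factorial (3*j+1) : ℚ) / (Nat.factorial (n + j) : ℚ)
    rw [← add_mul, h, zero_mul]
  · intro i hi _
    simp only [Finset.mem_Icc] at hi
    rcases hne with ⟨m, hm⟩
    omega
  · intro i hi
    simp only [Finset.mem_Icc] at hi ⊢
    omega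
  · intro i hi
    simp only [Finset.mem_Icc] at hi
    omega
end

section
/- For every positive integer m, binom(3m, m)·(2m)!·Π_{j=0}^{2m−1} (3j+1)!/(2m+j+1)! = ((1/2^m)·Π_{i=1}^{m} (6i−2)!(2i−1)!/((4i−1)!(4i−2)!))^2. -/
set_option maxHeartbeats 1000000
open Finset

def sfQ (n : ℕ) : ℚ := ∏ k ∈ Finset.range (n+1), (Nat.factorial k : ℚ)
def npQ (n : ℕ) : ℚ := ∏ j ∈ Finset.range n, (Nat.factorial (3*j+1) : ℚ)
def P1Q (m : ℕ) : ℚ := ∏ i ∈ Finset.Icc 1 m, ((Nat.factorial (4*i-1) : ℚ) * (Nat.factorial (4*i-2) : ℚ))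
def P2Q (m : ℕ) : ℚ := ∏ i ∈ Finset.Icc 1 m, ((Nat.factorial (6*i-2) : ℚ) * (Nat.factorial (2*i-1) : ℚ))

lemma fne (n : ℕ) : (Nat.factorial n : ℚ) ≠ 0 :=
  Nat.cast_ne_zero.mpr (Nat.factorial_ne_zero n)

lemma sfQ_ne (n : ℕ) : sfQ n ≠ 0 :=
  Finset.prod_ne_zero_iff.mpr fun k _ => fne k

lemma P1Q_ne (m : ℕ) : P1Q m ≠ 0 :=
  Finset.prod_ne_zero_iff.mpr fun k _ => mul_ne_zero (fne _) (fne _)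

lemma fsuccQ (n : ℕ) : (Nat.factorial (n+1) : ℚ) = ((n:ℚ)+1) * (Nat.factorial n : ℚ) := by
  push_cast [Nat.factorial_succ]; ring

lemma hchooseQ (m : ℕ) :
    ((Nat.choose (3*(m+1)) (m+1) : ℚ)) * (((m:ℚ)+1)*(2*m+1)*(2*m+2)) =
    ((Nat.choose (3*m) m : ℚ)) * ((3*(m:ℚ)+1)*(3*m+2)*(3*m+3)) := by
  have hc1 : (Nat.choose (3*m) m : ℚ) = (Nat.factorial (3*m) : ℚ) /
      ((Nat.factorial m : ℚ) * (Nat.factorial (2*m) : ℚ)) := by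
    rw [Nat.cast_choose ℚ (by omega : m ≤ 3*m), show 3*m - m = 2*m from by omega]
  have hc2 : (Nat.choose (3*(m+1)) (m+1) : ℚ) = (Nat.factorial (3*m+3) : ℚ) /
      ((Nat.factorial (m+1) : ℚ) * (Nat.factorial (2*m+2) : ℚ)) := by
    rw [Nat.cast_choose ℚ (by omega : m+1 ≤ 3*(m+1)),
        show 3*(m+1) - (m+1) = 2*m+2 from by omega, show 3*(m+1) = 3*m+3 from by omega]
  rw [hc1, hc2,
      show 3*m+3 = (3*m+2)+1 from rfl, show (3*m+2) = (3*m+1)+1 from rfl,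
      show (3*m+1) = (3*m)+1 from rfl,
      show 2*m+2 = (2*m+1)+1 from rfl, show (2*m+1) = (2*m)+1 from rfl]
  simp only [fsuccQ]
  have h1 := fne m; have h2 := fne (2*m); have h3 := fne (3*m)
  field_simp
  push_cast
  ring

lemma mainE (m : ℕ) :
    (Nat.choose (3*m) m : ℚ) * (Nat.factorial (2*m) : ℚ) * npQ (2*m) * sfQ (2*m)
      * 4^m * (P1Q m)^2 = sfQ (4*m) * (P2Q m)^2 := by
  induction m with
  | zero => simp [npQ, sfQ, P1Q, P2Q, Nat.factorial]
  | succ m ih =>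
    have h2 : 2*(m+1) = 2*m+1+1 := by ring
    have h4 : 4*(m+1) = 4*m+1+1+1+1 := by ring
    have hsf2 : sfQ (2*m+2) = sfQ (2*m) * (Nat.factorial (2*m+1) : ℚ) * (Nat.factorial (2*m+2) : ℚ) := by
      rw [show 2*m+2 = 2*m+1+1 from rfl]; simp [sfQ, Finset.prod_range_succ]; try ring
    have hsf4 : sfQ (4*(m+1)) = sfQ (4*m) * (Nat.factorial (4*m+1) : ℚ)
        * (Nat.factorial (4*m+2) : ℚ) * (Nat.factorial (4*m+3) : ℚ) * (Nat.factorial (4*m+4) : ℚ) := by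
      rw [h4]; simp [sfQ, Finset.prod_range_succ]; try ring
    have hnp : npQ (2*m+2) = npQ (2*m) * (Nat.factorial (6*m+1) : ℚ) * (Nat.factorial (6*m+4) : ℚ) := by
      rw [show 2*m+2 = 2*m+1+1 from rfl]; simp [npQ, Finset.prod_range_succ]
      try rw [show 3*(2*m)+1 = 6*m+1 from by ring, show 3*(2*m+1)+1 = 6*m+4 from by ring]
      try ring
    have hP1 : P1Q (m+1) = P1Q m * ((Nat.factorial (4*m+3) : ℚ) * (Nat.factorial (4*m+2) : ℚ)) := by
      rw [P1Q, Finset.prod_Icc_succ_top (by omega : 1 ≤ m+1),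
          show 4*(m+1)-1 = 4*m+3 from by omega, show 4*(m+1)-2 = 4*m+2 from by omega]
      rfl
    have hP2 : P2Q (m+1) = P2Q m * ((Nat.factorial (6*m+4) : ℚ) * (Nat.factorial (2*m+1) : ℚ)) := by
      rw [P2Q, Finset.prod_Icc_succ_top (by omega : 1 ≤ m+1),
          show 6*(m+1)-2 = 6*m+4 from by omega, show 2*(m+1)-1 = 2*m+1 from by omega]
      rfl
    -- factorial expansions
    have hf22 : (Nat.factorial (2*m+2) : ℚ) = (2*(m:ℚ)+2)*(2*m+1)*(Nat.factorial (2*m) : ℚ) := by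
      rw [show 2*m+2 = (2*m+1)+1 from rfl, show (2*m+1) = (2*m)+1 from rfl]
      simp only [fsuccQ]; push_cast; ring
    have hf21 : (Nat.factorial (2*m+1) : ℚ) = (2*(m:ℚ)+1)*(Nat.factorial (2*m) : ℚ) := by
      rw [show (2*m+1) = (2*m)+1 from rfl]; simp only [fsuccQ]; push_cast; ring
    have hf64 : (Nat.factorial (6*m+4) : ℚ) = (6*(m:ℚ)+4)*(6*m+3)*(6*m+2)*(Nat.factorial (6*m+1) : ℚ) := by
      rw [show 6*m+4 = (6*m+3)+1 from rfl, show (6*m+3) = (6*m+2)+1 from rfl,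
          show (6*m+2) = (6*m+1)+1 from rfl]
      simp only [fsuccQ]; push_cast; ring
    have hf41 : (Nat.factorial (4*m+1) : ℚ) = (4*(m:ℚ)+1)*(Nat.factorial (4*m) : ℚ) := by
      rw [show (4*m+1) = (4*m)+1 from rfl]; simp only [fsuccQ]; push_cast; ring
    have hf42 : (Nat.factorial (4*m+2) : ℚ) = (4*(m:ℚ)+2)*(4*m+1)*(Nat.factorial (4*m) : ℚ) := by
      rw [show 4*m+2 = (4*m+1)+1 from rfl, show (4*m+1) = (4*m)+1 from rfl]
      simp only [fsuccQ]; push_cast; ring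
    have hf43 : (Nat.factorial (4*m+3) : ℚ) = (4*(m:ℚ)+3)*(4*m+2)*(4*m+1)*(Nat.factorial (4*m) : ℚ) := by
      rw [show 4*m+3 = (4*m+2)+1 from rfl, show 4*m+2 = (4*m+1)+1 from rfl,
          show (4*m+1) = (4*m)+1 from rfl]
      simp only [fsuccQ]; push_cast; ring
    have hf44 : (Nat.factorial (4*m+4) : ℚ) = (4*(m:ℚ)+4)*(4*m+3)*(4*m+2)*(4*m+1)*(Nat.factorial (4*m) : ℚ) := by
      rw [show 4*m+4 = (4*m+3)+1 from rfl, show 4*m+3 = (4*m+2)+1 from rfl,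
          show 4*m+2 = (4*m+1)+1 from rfl, show (4*m+1) = (4*m)+1 from rfl]
      simp only [fsuccQ]; push_cast; ring
    have hd : (((m:ℚ)+1)*(2*m+1)*(2*m+2)) ≠ 0 := by positivity
    apply mul_left_cancel₀ hd
    rw [show (2*(m+1)) = 2*m+2 from by ring, hsf2, hsf4, hnp, hP1, hP2, hf64, hf44, hf43, hf42, hf41, hf22, hf21]
    set c1 := (Nat.choose (3*m) m : ℚ)
    set f2 := (Nat.factorial (2*m) : ℚ)
    set f4 := (Nat.factorial (4*m) : ℚ)
    set f6 := (Nat.factorial (6*m+1) : ℚ)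
    set np := npQ (2*m)
    set s2 := sfQ (2*m)
    set s4 := sfQ (4*m)
    set p1 := P1Q m
    set p2 := P2Q m
    have hmc : ((Nat.choose (3*(m+1)) (m+1) : ℚ)) * (((m:ℚ)+1)*(2*m+1)*(2*m+2)) =
        c1 * ((3*(m:ℚ)+1)*(3*m+2)*(3*m+3)) := hchooseQ m
    push_cast
    linear_combination
      (((2*(m:ℚ)+2)*(2*m+1)*f2) * (np * f6 * ((6*(m:ℚ)+4)*(6*m+3)*(6*m+2)*f6))
        * (s2 * ((2*(m:ℚ)+1)*f2) * ((2*(m:ℚ)+2)*(2*m+1)*f2)) * (4^(m+1))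
        * (p1 * (((4*(m:ℚ)+3)*(4*m+2)*(4*m+1)*f4) * ((4*(m:ℚ)+2)*(4*m+1)*f4)))^2) * hmc
      + ((((m:ℚ)+1)*(2*m+1)*(2*m+2)) *
          (((4*(m:ℚ)+1)*f4) * ((4*(m:ℚ)+2)*(4*m+1)*f4) * ((4*(m:ℚ)+3)*(4*m+2)*(4*m+1)*f4)
            * ((4*(m:ℚ)+4)*(4*m+3)*(4*m+2)*(4*m+1)*f4)
            * (((6*(m:ℚ)+4)*(6*m+3)*(6*m+2)*f6) * ((2*(m:ℚ)+1)*f2))^2)) * ih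

lemma prod_fact_denom (m : ℕ) :
    sfQ (2*m) * ∏ j ∈ Finset.range (2*m), (Nat.factorial (2*m + j + 1) : ℚ) = sfQ (4*m) := by
  rw [sfQ, sfQ, show 4*m+1 = (2*m+1) + 2*m from by ring]
  conv_rhs => rw [Finset.prod_range_add]
  congr 1
  apply Finset.prod_congr rfl
  intro j _
  rw [show 2*m + j + 1 = 2*m+1+j from by omega]

/-- For every positive integer `m`,
`C(3m, m)·(2m)!·Π_{j=0}^{2m−1} (3j+1)!/(2m+j+1)!`
equals `((1/2^m)·Π_{i=1}^{m} (6i−2)!(2i−1)!/((4i−1)!(4i−2)!))^2`. -/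
theorem asm_vsasm_identity (m : ℕ) (hm : 0 < m) :
    (Nat.choose (3*m) m : ℚ) * (Nat.factorial (2*m) : ℚ) *
      ∏ j ∈ Finset.range (2*m),
        (Nat.factorial (3*j+1) : ℚ) / (Nat.factorial (2*m + j + 1) : ℚ) =
    ((1 / 2 ^ m : ℚ) * ∏ i ∈ Finset.Icc 1 m,
      ((Nat.factorial (6*i-2) : ℚ) * (Nat.factorial (2*i-1) : ℚ)) /
        ((Nat.factorial (4*i-1) : ℚ) * (Nat.factorial (4*i-2) : ℚ))) ^ 2 := by
  have hL : (∏ j ∈ Finset.range (2*m),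
      (Nat.factorial (3*j+1) : ℚ) / (Nat.factorial (2*m + j + 1) : ℚ)) =
      npQ (2*m) * sfQ (2*m) / sfQ (4*m) := by
    rw [Finset.prod_div_distrib, ← npQ, ← prod_fact_denom m,
        mul_comm (npQ (2*m)) (sfQ (2*m)), mul_div_mul_left _ _ (sfQ_ne (2*m))]
  have hR : (∏ i ∈ Finset.Icc 1 m,
      ((Nat.factorial (6*i-2) : ℚ) * (Nat.factorial (2*i-1) : ℚ)) /
        ((Nat.factorial (4*i-1) : ℚ) * (Nat.factorial (4*i-2) : ℚ))) = P2Q m / P1Q m := by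
    rw [Finset.prod_div_distrib, P2Q, P1Q]
  rw [hL, hR]
  have hE := mainE m
  have h1 := sfQ_ne (4*m)
  have h2 := P1Q_ne m
  have h3 : ((2:ℚ)^m) ≠ 0 := by positivity
  have h44 : (4:ℚ)^m = 2^m * 2^m := by rw [← mul_pow]; norm_num
  field_simp
  linear_combination hE - (Nat.choose (3*m) m : ℚ) * (Nat.factorial (2*m) : ℚ) * npQ (2*m) * sfQ (2*m) * P1Q m ^2 * h44
end

section
/- The sum over i from 1 to n of A_{n,i} equals the total number of alternating sign matrices A_n = Π_{k=0}^{n−1} (3k+1)!/(n+k)!; i.e., Σ_{i=1}^{n} binom(n+i−2, i−1)·((2n−i−1)!/(n−i)!)·Π_{j=0}^{n−2} (3j+1)!/(n+j)! = Π_{k=0}^{n−1} (3k+1)!/(n+k)!. -/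
open Finset

/-- Vandermonde convolution of the second kind:
`∑ k ≤ m, C(r+k, k) * C(s+(m-k), m-k) = C(r+s+m+1, m)`. -/
lemma vand2 (s : ℕ) : ∀ m r : ℕ,
    ∑ k ∈ Finset.range (m+1), (r+k).choose k * (s+(m-k)).choose (m-k)
      = (r+s+m+1).choose m := by
  induction s with
  | zero =>
    intro m r
    have h1 : ∀ k ∈ Finset.range (m+1), (r+k).choose k * (0+(m-k)).choose (m-k)
        = (k+r).choose r := by
      intro k hk
      rw [zero_add, Nat.choose_self, mul_one, add_comm r k, Nat.choose_symm_add]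
    rw [Finset.sum_congr rfl h1, Nat.sum_range_add_choose]
    have h2 : (m + r + 1).choose (r + 1) = (m + r + 1).choose m := by
      rw [← Nat.choose_symm (by omega)]
      congr 1
      omega
    rw [h2]
    congr 1
    omega
  | succ s ihs =>
    intro m
    induction m with
    | zero => intro r; simp
    | succ m ihm =>
      intro r
      rw [Finset.sum_range_succ]
      have hsplit : ∑ k ∈ Finset.range (m+1), (r+k).choose k * (s+1+(m+1-k)).choose (m+1-k)
          = (∑ k ∈ Finset.range (m+1), (r+k).choose k * (s+(m+1-k)).choose (m+1-k))
            + ∑ k ∈ Finset.range (m+1), (r+k).choose k * (s+1+(m-k)).choose (m-k) := by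
        rw [← Finset.sum_add_distrib]
        refine Finset.sum_congr rfl fun k hk => ?_
        simp only [Finset.mem_range] at hk
        have h1 : m+1-k = (m-k)+1 := by omega
        have h2 : s+1+(m+1-k) = (s+(m-k)+1)+1 := by omega
        rw [h2, h1, Nat.choose_succ_succ' (s+(m-k)+1) (m-k),
          show s+(m-k+1) = s+(m-k)+1 by omega, show s+1+(m-k) = s+(m-k)+1 by omega]
        ring
      rw [hsplit]
      have hA : ∑ k ∈ Finset.range (m+1), (r+k).choose k * (s+(m+1-k)).choose (m+1-k)
          + (r+(m+1)).choose (m+1) * (s+(m+1-(m+1))).choose (m+1-(m+1))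
          = (r+s+m+2).choose (m+1) := by
        rw [show r+s+m+2 = r+s+(m+1)+1 by omega, ← Finset.sum_range_succ]
        exact ihs (m+1) r
      have hB : ∑ k ∈ Finset.range (m+1), (r+k).choose k * (s+1+(m-k)).choose (m-k)
          = (r+s+m+2).choose m := by
        rw [show r+s+m+2 = r+(s+1)+m+1 by omega]; exact ihm r
      have hlast : (r+(m+1)).choose (m+1) * (s+1+(m+1-(m+1))).choose (m+1-(m+1))
          = (r+(m+1)).choose (m+1) * (s+(m+1-(m+1))).choose (m+1-(m+1)) := by
        simp
      rw [hlast, show r+(s+1)+(m+1)+1 = r+s+m+2+1 by omega,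
        Nat.choose_succ_succ' (r+s+m+2) m]
      omega

/-- The refined ASM counts sum to the total number of alternating sign matrices:
`Σ_{i=1}^{n} C(n+i−2, i−1)·(2n−i−1)!/(n−i)!·Π_{j=0}^{n−2} (3j+1)!/(n+j)!
  = Π_{k=0}^{n−1} (3k+1)!/(n+k)!`. -/
theorem sum_refined_asm (n : ℕ) (hn : 0 < n) :
    (∑ i ∈ Finset.Icc 1 n,
        (Nat.choose (n + i - 2) (i - 1) : ℚ) *
        ((Nat.factorial (2*n - i - 1) : ℚ) / (Nat.factorial (n - i) : ℚ)) *
        ∏ j ∈ Finset.range (n - 1),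
          (Nat.factorial (3*j+1) : ℚ) / (Nat.factorial (n + j) : ℚ)) =
    ∏ k ∈ Finset.range n,
      (Nat.factorial (3*k+1) : ℚ) / (Nat.factorial (n + k) : ℚ) := by
  obtain ⟨m, rfl⟩ : ∃ m, n = m + 1 := ⟨n - 1, by omega⟩
  simp only [Nat.add_sub_cancel]
  rw [Finset.prod_range_succ, ← Finset.sum_mul]
  have hsum : ∑ i ∈ Finset.Icc 1 (m+1),
      (Nat.choose (m + 1 + i - 2) (i - 1) : ℚ) *
        ((Nat.factorial (2*(m+1) - i - 1) : ℚ) / (Nat.factorial (m + 1 - i) : ℚ))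
      = ((Nat.factorial (3*m+1) : ℚ) / (Nat.factorial (m + 1 + m) : ℚ)) := by
    rw [← Finset.Ico_add_one_right_eq_Icc, Finset.sum_Ico_eq_sum_range]
    have hb : m + 1 + 1 - 1 = m + 1 := by omega
    rw [hb]
    have hterm : ∀ k ∈ Finset.range (m+1),
        (Nat.choose (m + 1 + (1+k) - 2) ((1+k) - 1) : ℚ) *
          ((Nat.factorial (2*(m+1) - (1+k) - 1) : ℚ) / (Nat.factorial (m + 1 - (1+k)) : ℚ))
        = (((m+k).choose k * (m+(m-k)).choose (m-k) * Nat.factorial m : ℕ) : ℚ) := by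
      intro k hk
      simp only [Finset.mem_range] at hk
      have hk' : k ≤ m := by omega
      have e1 : m + 1 + (1+k) - 2 = m + k := by omega
      have e2 : (1+k) - 1 = k := by omega
      have e3 : 2*(m+1) - (1+k) - 1 = m + (m-k) := by omega
      have e4 : m + 1 - (1+k) = m - k := by omega
      rw [e1, e2, e3, e4]
      have hf : (m+(m-k)).factorial
          = (m+(m-k)).choose (m-k) * (m-k).factorial * m.factorial := by
        have h := Nat.choose_mul_factorial_mul_factorial
          (show m - k ≤ m + (m-k) by omega)
        rw [show m + (m-k) - (m-k) = m by omega] at h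
        omega
      have hq : ((m+(m-k)).factorial : ℚ) / ((m-k).factorial : ℚ)
          = (((m+(m-k)).choose (m-k) * m.factorial : ℕ) : ℚ) := by
        rw [div_eq_iff (Nat.cast_ne_zero.mpr (Nat.factorial_ne_zero _))]
        push_cast [hf]
        ring
      rw [hq]
      push_cast
      ring
    rw [Finset.sum_congr rfl hterm, ← Nat.cast_sum, ← Finset.sum_mul,
      vand2 m m m]
    have hf2 : (3*m+1).factorial
        = (m+m+m+1).choose m * m.factorial * (m+1+m).factorial := by
      have h := Nat.choose_mul_factorial_mul_factorial
        (show m ≤ m+m+m+1 by omega)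
      rw [show m+m+m+1 - m = m+1+m by omega] at h
      rw [show 3*m+1 = m+m+m+1 by omega]
      omega
    rw [eq_div_iff (Nat.cast_ne_zero.mpr (Nat.factorial_ne_zero _))]
    push_cast [hf2]
    ring
  rw [hsum, mul_comm]
end
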